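/- Define the sequence (Λ_n)_{n≥0} recursively by Λ_0 = 1 and Λ_n = ∑_{i=0}^{n−1} C(n,i) Λ_i for n ≥ 1. Then Λ_n ≤ n! / α^n for all n ≥ 0 and all real α with 0 < α ≤ ln 2. -/

import Mathlib

open Finset

lemma aux_sum_le_one {α : ℝ} (hα0 : 0 < α) (hα : α ≤ Real.log 2) (n : ℕ) :
    ∑ k ∈ range n, α ^ (k + 1) / (Nat.factorial (k + 1) : ℝ) ≤ 1 := by
  have h1 : ∑ i ∈ range (n + 1), α ^ i / (Nat.factorial i : ℝ) ≤ Real.exp α :=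
    Real.sum_le_exp_of_nonneg hα0.le _
  have h2 : Real.exp α ≤ 2 := by
    calc Real.exp α ≤ Real.exp (Real.log 2) := Real.exp_le_exp.mpr hα
      _ = 2 := Real.exp_log (by norm_num)
  have h3 : ∑ i ∈ range (n + 1), α ^ i / (Nat.factorial i : ℝ)
      = (∑ k ∈ range n, α ^ (k + 1) / (Nat.factorial (k + 1) : ℝ)) + 1 := by
    rw [Finset.sum_range_succ']
    simp
  linarith

/-- If `Λ_0 = 1` and `Λ_n = ∑_{i=0}^{n−1} C(n,i) Λ_i` for `n ≥ 1` (the ordered Bell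
numbers), then `Λ_n ≤ n!/α^n` for all `n ≥ 0` and all real `0 < α ≤ ln 2`. -/
theorem orderedBell_le_factorial_div_pow
    (Λ : ℕ → ℝ) (h0 : Λ 0 = 1)
    (hrec : ∀ n : ℕ, 1 ≤ n → Λ n = ∑ i ∈ Finset.range n, (n.choose i : ℝ) * Λ i)
    (α : ℝ) (hα0 : 0 < α) (hα : α ≤ Real.log 2) :
    ∀ n : ℕ, Λ n ≤ (Nat.factorial n : ℝ) / α ^ n := by
  intro n
  induction n using Nat.strong_induction_on with
  | _ n ih =>
    rcases Nat.eq_zero_or_pos n with rfl | hn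
    · simp [h0]
    · rw [hrec n hn]
      calc ∑ i ∈ range n, (n.choose i : ℝ) * Λ i
          ≤ ∑ i ∈ range n, (n.choose i : ℝ) * ((Nat.factorial i : ℝ) / α ^ i) := by
            apply Finset.sum_le_sum
            intro i hi
            exact mul_le_mul_of_nonneg_left (ih i (Finset.mem_range.mp hi))
              (Nat.cast_nonneg _)
        _ = (Nat.factorial n : ℝ) / α ^ n *
            ∑ i ∈ range n, α ^ (n - i) / (Nat.factorial (n - i) : ℝ) := by
            rw [Finset.mul_sum]
            apply Finset.sum_congr rfl
            intro i hi
            have hi' : i < n := Finset.mem_range.mp hi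
            have hc : ((n.choose i : ℕ) : ℝ) * (Nat.factorial i : ℝ) *
                (Nat.factorial (n - i) : ℝ) = (Nat.factorial n : ℝ) := by
              exact_mod_cast Nat.choose_mul_factorial_mul_factorial hi'.le
            have hpow : α ^ (n - i) * α ^ i = α ^ n := by
              rw [← pow_add, Nat.sub_add_cancel hi'.le]
            have hfac : (Nat.factorial (n - i) : ℝ) ≠ 0 := by
              exact_mod_cast (Nat.factorial_pos _).ne'
            have hαn : α ^ n ≠ 0 := (pow_pos hα0 n).ne'
            have hαi : (α : ℝ) ^ i ≠ 0 := (pow_pos hα0 i).ne'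
            rw [← hc, ← hpow]
            field_simp
        _ ≤ (Nat.factorial n : ℝ) / α ^ n * 1 := by
            apply mul_le_mul_of_nonneg_left _ (by positivity)
            have := aux_sum_le_one hα0 hα n
            calc ∑ i ∈ range n, α ^ (n - i) / (Nat.factorial (n - i) : ℝ)
                = ∑ k ∈ range n, α ^ (k + 1) / (Nat.factorial (k + 1) : ℝ) := by
                  rw [← Finset.sum_range_reflect]
                  apply Finset.sum_congr rfl
                  intro j hj
                  have hj' : j < n := Finset.mem_range.mp hj
                  have h : n - (n - 1 - j) = j + 1 := by omega
                  rw [h]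
              _ ≤ 1 := this
        _ = (Nat.factorial n : ℝ) / α ^ n := mul_one _
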